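/- Let V be an n-dimensional complex vector space equipped with two Hermitian inner products g and h, and let R̃ be a curvature-type tensor on V: a map R̃(X, Ȳ, Z, W̄), complex linear in X and Z, conjugate linear in Y and W, satisfying the Kähler symmetries R̃(X,Ȳ,Z,W̄) = R̃(Z,Ȳ,X,W̄) = R̃(X,W̄,Z,Ȳ) and the reality condition R̃(X,Ȳ,Z,W̄) = conj(R̃(Y,X̄,W,Z̄)). Suppose the holomorphic sectional curvature bound R̃(v,v̄,v,v̄) ≤ -κ h(v,v)² holds for all v ∈ V and some κ > 0. Then, with indices computed in any basis, g^{i j̄} g^{k l̄} R̃_{i j̄ k l̄} ≤ -((n+1)/(2n)) κ (tr_g h)², where tr_g h = g^{i j̄} h_{i j̄}. -/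

import Mathlib

open scoped ComplexConjugate ComplexOrder

noncomputable section

namespace RoydenAux

/-! ### The character `t ↦ i ^ t` on `ZMod 4` -/

def e (t : ZMod 4) : ℂ := Complex.I ^ t.val

lemma I_pow_mod_four (a : ℕ) : Complex.I ^ (a % 4) = Complex.I ^ a := by
  conv_rhs => rw [← Nat.div_add_mod a 4]
  rw [pow_add, pow_mul, Complex.I_pow_four, one_pow, one_mul]

lemma e_add (s t : ZMod 4) : e (s + t) = e s * e t := by
  unfold e
  rw [ZMod.val_add, I_pow_mod_four, pow_add]

@[simp] lemma e_zero : e 0 = 1 := by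
  rw [e, show (0 : ZMod 4).val = 0 from rfl, pow_zero]

lemma e_one : e 1 = Complex.I := by
  rw [e, show (1 : ZMod 4).val = 1 from rfl, pow_one]

lemma e_two : e 2 = -1 := by
  rw [e, show (2 : ZMod 4).val = 2 from rfl]; simp [pow_two, Complex.I_mul_I]

lemma e_three : e 3 = -Complex.I := by
  rw [e, show (3 : ZMod 4).val = 3 from rfl, pow_succ, pow_two, Complex.I_mul_I]; ring

lemma conj_e (t : ZMod 4) : conj (e t) = e (-t) := by
  have h4 : ∀ t : ZMod 4, t = 0 ∨ t = 1 ∨ t = 2 ∨ t = 3 := by decide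
  rcases h4 t with rfl | rfl | rfl | rfl <;>
    simp [e_one, e_two, e_three, show (-1 : ZMod 4) = 3 from rfl,
      show (-2 : ZMod 4) = 2 from rfl, show (-3 : ZMod 4) = 1 from rfl,
      show (-0 : ZMod 4) = 0 from rfl, Complex.ext_iff]

lemma e_ne_one (c : ZMod 4) (hc : c ≠ 0) : e c ≠ 1 := by
  have h4 : c = 1 ∨ c = 2 ∨ c = 3 := by revert hc; revert c; decide
  rcases h4 with rfl | rfl | rfl <;>
    norm_num [e_one, e_two, e_three, Complex.ext_iff]

lemma e_mul_conj (t : ZMod 4) : e t * conj (e t) = 1 := by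
  rw [conj_e, ← e_add, add_neg_cancel, e_zero]

section charsum
variable {n : ℕ}

/-- coefficient of coordinate `m` in the character `x ↦ e (x a - x b + x c - x d)`. -/
def cf (a b c d m : Fin n) : ZMod 4 :=
  (if a = m then 1 else 0) - (if b = m then 1 else 0)
    + (if c = m then 1 else 0) - (if d = m then 1 else 0)

lemma exists_cf_ne_zero (a b c d : Fin n)
    (hP : ¬((b = a ∧ d = c) ∨ (b = c ∧ d = a))) :
    ∃ m, cf a b c d m ≠ 0 := by
  by_cases hba : b = a
  · have hdc : d ≠ c := fun hdc => hP (Or.inl ⟨hba, hdc⟩)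
    refine ⟨c, ?_⟩
    simp only [cf, if_pos rfl, if_neg hdc, hba]
    by_cases hac : a = c <;> simp [hac] <;> decide
  · by_cases hda : d = a
    · have hbc : b ≠ c := fun hbc => hP (Or.inr ⟨hbc, hda⟩)
      refine ⟨c, ?_⟩
      simp only [cf, if_pos rfl, if_neg hbc, hda]
      by_cases hac : a = c <;> simp [hac] <;> decide
    · refine ⟨a, ?_⟩
      simp only [cf, if_pos rfl, if_neg hba, if_neg hda]
      by_cases hca : c = a <;> simp [hca] <;> decide

lemma char_sum (a b c d : Fin n) :
    ∑ x : Fin n → ZMod 4, e (x a - x b + x c - x d) =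
      if (b = a ∧ d = c) ∨ (b = c ∧ d = a) then (4 : ℂ) ^ n else 0 := by
  by_cases hP : (b = a ∧ d = c) ∨ (b = c ∧ d = a)
  · rw [if_pos hP]
    have hzero : ∀ x : Fin n → ZMod 4, x a - x b + x c - x d = 0 := by
      rcases hP with ⟨rfl, rfl⟩ | ⟨rfl, rfl⟩ <;> intro x <;> ring
    simp only [hzero, e_zero, Finset.sum_const, nsmul_eq_mul, mul_one]
    rw [Finset.card_univ, Fintype.card_fun, ZMod.card, Fintype.card_fin]
    push_cast
    ring
  · rw [if_neg hP]
    obtain ⟨m, hm⟩ := exists_cf_ne_zero a b c d hP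
    set S := ∑ x : Fin n → ZMod 4, e (x a - x b + x c - x d) with hS
    have key : S = e (cf a b c d m) * S := by
      have hcomp := Equiv.sum_comp (Equiv.addRight (fun m' => if m' = m then (1 : ZMod 4) else 0))
        (fun x : Fin n → ZMod 4 => e (x a - x b + x c - x d))
      calc S = ∑ x : Fin n → ZMod 4,
            e ((Equiv.addRight (fun m' => if m' = m then (1 : ZMod 4) else 0)) x a
              - (Equiv.addRight (fun m' => if m' = m then (1 : ZMod 4) else 0)) x b
              + (Equiv.addRight (fun m' => if m' = m then (1 : ZMod 4) else 0)) x c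
              - (Equiv.addRight (fun m' => if m' = m then (1 : ZMod 4) else 0)) x d) := hcomp.symm
        _ = e (cf a b c d m) * S := ?_
      rw [hS, Finset.mul_sum]
      apply Finset.sum_congr rfl
      intro x _
      have harg : ∀ z : Fin n, (Equiv.addRight (fun m' => if m' = m then (1 : ZMod 4) else 0)) x z
          = x z + (if z = m then 1 else 0) := fun z => rfl
      rw [show ((Equiv.addRight (fun m' => if m' = m then (1 : ZMod 4) else 0)) x a
            - (Equiv.addRight (fun m' => if m' = m then (1 : ZMod 4) else 0)) x b
            + (Equiv.addRight (fun m' => if m' = m then (1 : ZMod 4) else 0)) x c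
            - (Equiv.addRight (fun m' => if m' = m then (1 : ZMod 4) else 0)) x d)
          = cf a b c d m + (x a - x b + x c - x d) from by
        rw [harg a, harg b, harg c, harg d, cf]
        rw [show (if a = m then (1:ZMod 4) else 0) - (if b = m then 1 else 0)
          + (if c = m then 1 else 0) - (if d = m then 1 else 0)
          + (x a - x b + x c - x d) = (x a + (if a = m then 1 else 0))
          - (x b + (if b = m then 1 else 0)) + (x c + (if c = m then 1 else 0))
          - (x d + (if d = m then 1 else 0)) from by ring]]
      rw [e_add]
    have hzero : (1 - e (cf a b c d m)) * S = 0 := by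
      rw [sub_mul, one_mul, ← key, sub_self]
    rcases mul_eq_zero.mp hzero with h | h
    · exact absurd (by linear_combination -h : e (cf a b c d m) = 1) (e_ne_one _ hm)
    · exact h

end charsum

/-! ### Multilinear algebra of the curvature pairing -/

variable {n : ℕ}

/-- The curvature pairing `R̃(x, ȳ, z, t̄)` as a sum over a product type. -/
def Rq (R : Fin n → Fin n → Fin n → Fin n → ℂ) (x y z t : Fin n → ℂ) : ℂ :=
  ∑ p : Fin n × Fin n × Fin n × Fin n,
    R p.1 p.2.1 p.2.2.1 p.2.2.2 * x p.1 * conj (y p.2.1) * z p.2.2.1 * conj (t p.2.2.2)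

lemma Rq_eq_sum (R : Fin n → Fin n → Fin n → Fin n → ℂ) (x y z t : Fin n → ℂ) :
    Rq R x y z t
      = ∑ i, ∑ j, ∑ k, ∑ l, R i j k l * x i * conj (y j) * z k * conj (t l) := by
  rw [Rq, Fintype.sum_prod_type]
  exact Finset.sum_congr rfl fun i _ => by
    rw [Fintype.sum_prod_type]
    exact Finset.sum_congr rfl fun j _ => by rw [Fintype.sum_prod_type]

/-- The hermitian pairing `h(x, y)`. -/
def Hq (h : Matrix (Fin n) (Fin n) ℂ) (x y : Fin n → ℂ) : ℂ :=
  ∑ p : Fin n × Fin n, h p.1 p.2 * x p.1 * conj (y p.2)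

lemma Hq_eq_sum (h : Matrix (Fin n) (Fin n) ℂ) (x y : Fin n → ℂ) :
    Hq h x y = ∑ i, ∑ j, h i j * x i * conj (y j) := by
  rw [Hq, Fintype.sum_prod_type]

variable (R : Fin n → Fin n → Fin n → Fin n → ℂ) (h : Matrix (Fin n) (Fin n) ℂ)

lemma Rq_sum1 (α : Fin n → ℂ) (w : Fin n → Fin n → ℂ) (y z t : Fin n → ℂ) :
    Rq R (fun i => ∑ a, α a * w a i) y z t = ∑ a, α a * Rq R (w a) y z t := by
  unfold Rq
  calc ∑ p : Fin n × Fin n × Fin n × Fin n,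
        R p.1 p.2.1 p.2.2.1 p.2.2.2 * (∑ a, α a * w a p.1) * conj (y p.2.1) * z p.2.2.1
          * conj (t p.2.2.2)
      = ∑ p : Fin n × Fin n × Fin n × Fin n, ∑ a, α a * (R p.1 p.2.1 p.2.2.1 p.2.2.2 * w a p.1
          * conj (y p.2.1) * z p.2.2.1 * conj (t p.2.2.2)) := by
        refine Finset.sum_congr rfl fun p _ => ?_
        simp only [Finset.mul_sum, Finset.sum_mul]
        exact Finset.sum_congr rfl fun a _ => by ring
    _ = ∑ a, ∑ p : Fin n × Fin n × Fin n × Fin n, α a * (R p.1 p.2.1 p.2.2.1 p.2.2.2 * w a p.1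
          * conj (y p.2.1) * z p.2.2.1 * conj (t p.2.2.2)) := Finset.sum_comm
    _ = _ := by
        refine Finset.sum_congr rfl fun a _ => ?_
        rw [Finset.mul_sum]

lemma Rq_sum2 (β : Fin n → ℂ) (w : Fin n → Fin n → ℂ) (x z t : Fin n → ℂ) :
    Rq R x (fun j => ∑ b, β b * w b j) z t = ∑ b, conj (β b) * Rq R x (w b) z t := by
  unfold Rq
  calc ∑ p : Fin n × Fin n × Fin n × Fin n,
        R p.1 p.2.1 p.2.2.1 p.2.2.2 * x p.1 * conj (∑ b, β b * w b p.2.1) * z p.2.2.1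
          * conj (t p.2.2.2)
      = ∑ p : Fin n × Fin n × Fin n × Fin n, ∑ b, conj (β b) * (R p.1 p.2.1 p.2.2.1 p.2.2.2
          * x p.1 * conj (w b p.2.1) * z p.2.2.1 * conj (t p.2.2.2)) := by
        refine Finset.sum_congr rfl fun p _ => ?_
        simp only [map_sum, map_mul, Finset.mul_sum, Finset.sum_mul]
        exact Finset.sum_congr rfl fun b _ => by ring
    _ = ∑ b, ∑ p : Fin n × Fin n × Fin n × Fin n, conj (β b) * (R p.1 p.2.1 p.2.2.1 p.2.2.2
          * x p.1 * conj (w b p.2.1) * z p.2.2.1 * conj (t p.2.2.2)) := Finset.sum_comm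
    _ = _ := by
        refine Finset.sum_congr rfl fun b _ => ?_
        rw [Finset.mul_sum]

lemma Rq_sum3 (γ : Fin n → ℂ) (w : Fin n → Fin n → ℂ) (x y t : Fin n → ℂ) :
    Rq R x y (fun k => ∑ c, γ c * w c k) t = ∑ c, γ c * Rq R x y (w c) t := by
  unfold Rq
  calc ∑ p : Fin n × Fin n × Fin n × Fin n,
        R p.1 p.2.1 p.2.2.1 p.2.2.2 * x p.1 * conj (y p.2.1) * (∑ c, γ c * w c p.2.2.1)
          * conj (t p.2.2.2)
      = ∑ p : Fin n × Fin n × Fin n × Fin n, ∑ c, γ c * (R p.1 p.2.1 p.2.2.1 p.2.2.2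
          * x p.1 * conj (y p.2.1) * w c p.2.2.1 * conj (t p.2.2.2)) := by
        refine Finset.sum_congr rfl fun p _ => ?_
        simp only [Finset.mul_sum, Finset.sum_mul]
        exact Finset.sum_congr rfl fun c _ => by ring
    _ = ∑ c, ∑ p : Fin n × Fin n × Fin n × Fin n, γ c * (R p.1 p.2.1 p.2.2.1 p.2.2.2
          * x p.1 * conj (y p.2.1) * w c p.2.2.1 * conj (t p.2.2.2)) := Finset.sum_comm
    _ = _ := by
        refine Finset.sum_congr rfl fun c _ => ?_
        rw [Finset.mul_sum]

lemma Rq_sum4 (δ : Fin n → ℂ) (w : Fin n → Fin n → ℂ) (x y z : Fin n → ℂ) :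
    Rq R x y z (fun l => ∑ d, δ d * w d l) = ∑ d, conj (δ d) * Rq R x y z (w d) := by
  unfold Rq
  calc ∑ p : Fin n × Fin n × Fin n × Fin n,
        R p.1 p.2.1 p.2.2.1 p.2.2.2 * x p.1 * conj (y p.2.1) * z p.2.2.1
          * conj (∑ d, δ d * w d p.2.2.2)
      = ∑ p : Fin n × Fin n × Fin n × Fin n, ∑ d, conj (δ d) * (R p.1 p.2.1 p.2.2.1 p.2.2.2
          * x p.1 * conj (y p.2.1) * z p.2.2.1 * conj (w d p.2.2.2)) := by
        refine Finset.sum_congr rfl fun p _ => ?_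
        simp only [map_sum, map_mul, Finset.mul_sum, Finset.sum_mul]
        exact Finset.sum_congr rfl fun d _ => by ring
    _ = ∑ d, ∑ p : Fin n × Fin n × Fin n × Fin n, conj (δ d) * (R p.1 p.2.1 p.2.2.1 p.2.2.2
          * x p.1 * conj (y p.2.1) * z p.2.2.1 * conj (w d p.2.2.2)) := Finset.sum_comm
    _ = _ := by
        refine Finset.sum_congr rfl fun d _ => ?_
        rw [Finset.mul_sum]

lemma Hq_sum1 (α : Fin n → ℂ) (w : Fin n → Fin n → ℂ) (y : Fin n → ℂ) :
    Hq h (fun i => ∑ a, α a * w a i) y = ∑ a, α a * Hq h (w a) y := by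
  unfold Hq
  calc ∑ p : Fin n × Fin n, h p.1 p.2 * (∑ a, α a * w a p.1) * conj (y p.2)
      = ∑ p : Fin n × Fin n, ∑ a, α a * (h p.1 p.2 * w a p.1 * conj (y p.2)) := by
        refine Finset.sum_congr rfl fun p _ => ?_
        simp only [Finset.mul_sum, Finset.sum_mul]
        exact Finset.sum_congr rfl fun a _ => by ring
    _ = ∑ a, ∑ p : Fin n × Fin n, α a * (h p.1 p.2 * w a p.1 * conj (y p.2)) := Finset.sum_comm
    _ = _ := by
        refine Finset.sum_congr rfl fun a _ => ?_
        rw [Finset.mul_sum]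

lemma Hq_sum2 (β : Fin n → ℂ) (w : Fin n → Fin n → ℂ) (x : Fin n → ℂ) :
    Hq h x (fun j => ∑ b, β b * w b j) = ∑ b, conj (β b) * Hq h x (w b) := by
  unfold Hq
  calc ∑ p : Fin n × Fin n, h p.1 p.2 * x p.1 * conj (∑ b, β b * w b p.2)
      = ∑ p : Fin n × Fin n, ∑ b, conj (β b) * (h p.1 p.2 * x p.1 * conj (w b p.2)) := by
        refine Finset.sum_congr rfl fun p _ => ?_
        simp only [map_sum, map_mul, Finset.mul_sum, Finset.sum_mul]
        exact Finset.sum_congr rfl fun b _ => by ring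
    _ = ∑ b, ∑ p : Fin n × Fin n, conj (β b) * (h p.1 p.2 * x p.1 * conj (w b p.2)) :=
        Finset.sum_comm
    _ = _ := by
        refine Finset.sum_congr rfl fun b _ => ?_
        rw [Finset.mul_sum]

/-- Swap of the two conjugate-linear slots, using the symmetry `R i j k l = R i l k j`. -/
lemma Rq_swap24 (hsymm₂ : ∀ i j k l, R i j k l = R i l k j) (x y : Fin n → ℂ) :
    Rq R x y y x = Rq R x x y y := by
  unfold Rq
  refine Fintype.sum_equiv
    ⟨fun p : Fin n × Fin n × Fin n × Fin n => (p.1, p.2.2.2, p.2.2.1, p.2.1),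
     fun p => (p.1, p.2.2.2, p.2.2.1, p.2.1), fun p => rfl, fun p => rfl⟩ _ _ ?_
  rintro ⟨i, j, k, l⟩
  simp only [Equiv.coe_fn_mk]
  rw [← hsymm₂ i j k l]
  ring

lemma sum_comm5 {M : Type*} [AddCommMonoid M] {ι : Type*} [Fintype ι]
    (f : ι → Fin n → Fin n → Fin n → Fin n → M) :
    ∑ x : ι, ∑ a, ∑ b, ∑ c, ∑ d, f x a b c d
      = ∑ a, ∑ b, ∑ c, ∑ d, ∑ x : ι, f x a b c d := by
  rw [Finset.sum_comm]
  refine Finset.sum_congr rfl fun a _ => ?_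
  rw [Finset.sum_comm]
  refine Finset.sum_congr rfl fun b _ => ?_
  rw [Finset.sum_comm]
  refine Finset.sum_congr rfl fun c _ => ?_
  exact Finset.sum_comm

/-- Expansion of the quartic in the family `w` with coefficients `e (x a)`. -/
lemma quartic_expand (w : Fin n → Fin n → ℂ) (x : Fin n → ZMod 4) :
    Rq R (fun i => ∑ a, e (x a) * w a i) (fun i => ∑ a, e (x a) * w a i)
        (fun i => ∑ a, e (x a) * w a i) (fun i => ∑ a, e (x a) * w a i)
      = ∑ a, ∑ b, ∑ c, ∑ d,
          e (x a - x b + x c - x d) * Rq R (w a) (w b) (w c) (w d) := by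
  have ee : ∀ a b c d : Fin n, e (x a - x b + x c - x d)
      = e (x a) * conj (e (x b)) * e (x c) * conj (e (x d)) := by
    intro a b c d
    rw [conj_e, conj_e, show x a - x b + x c - x d = x a + -x b + (x c + -x d) from by ring,
      e_add, e_add, e_add]
    ring
  rw [Rq_sum1]
  refine Finset.sum_congr rfl fun a _ => ?_
  rw [Rq_sum2, Finset.mul_sum]
  refine Finset.sum_congr rfl fun b _ => ?_
  rw [Rq_sum3, Finset.mul_sum, Finset.mul_sum]
  refine Finset.sum_congr rfl fun c _ => ?_
  rw [Rq_sum4, Finset.mul_sum, Finset.mul_sum, Finset.mul_sum]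
  refine Finset.sum_congr rfl fun d _ => ?_
  rw [ee]
  ring

lemma sum_ite_const {p : Prop} [Decidable p] (f : Fin n → ℂ) :
    ∑ c, (if p then f c else 0) = if p then ∑ c, f c else 0 := by split <;> simp

/-- Averaging the quartic over all `4 ^ n` sign vectors. -/
lemma key_identity (w : Fin n → Fin n → ℂ) :
    ∑ x : Fin n → ZMod 4,
        Rq R (fun i => ∑ a, e (x a) * w a i) (fun i => ∑ a, e (x a) * w a i)
          (fun i => ∑ a, e (x a) * w a i) (fun i => ∑ a, e (x a) * w a i)
      = (4 : ℂ) ^ n * ((∑ a, ∑ c, Rq R (w a) (w a) (w c) (w c))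
          + (∑ a, ∑ b, Rq R (w a) (w b) (w b) (w a))
          - ∑ a, Rq R (w a) (w a) (w a) (w a)) := by
  have step1 : ∑ x : Fin n → ZMod 4,
      Rq R (fun i => ∑ a, e (x a) * w a i) (fun i => ∑ a, e (x a) * w a i)
        (fun i => ∑ a, e (x a) * w a i) (fun i => ∑ a, e (x a) * w a i)
      = ∑ a, ∑ b, ∑ c, ∑ d, (if (b = a ∧ d = c) ∨ (b = c ∧ d = a) then (4 : ℂ) ^ n else 0)
          * Rq R (w a) (w b) (w c) (w d) := by
    rw [Finset.sum_congr rfl fun x _ => quartic_expand R w x, sum_comm5]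
    refine Finset.sum_congr rfl fun a _ => Finset.sum_congr rfl fun b _ =>
      Finset.sum_congr rfl fun c _ => Finset.sum_congr rfl fun d _ => ?_
    rw [← Finset.sum_mul, char_sum]
  rw [step1]
  have split : ∀ a b c d : Fin n,
      (if (b = a ∧ d = c) ∨ (b = c ∧ d = a) then (4 : ℂ) ^ n else 0)
          * Rq R (w a) (w b) (w c) (w d)
        = (if d = c then (if b = a then (4 : ℂ) ^ n * Rq R (w a) (w b) (w c) (w d) else 0) else 0)
          + (if d = a then (if c = b then (4 : ℂ) ^ n * Rq R (w a) (w b) (w c) (w d) else 0) else 0)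
          - (if d = a then (if c = a then (if b = a then
              (4 : ℂ) ^ n * Rq R (w a) (w b) (w c) (w d) else 0) else 0) else 0) := by
    intro a b c d
    split_ifs <;> subst_vars <;>
      (first
        | ring1
        | exact absurd rfl (by assumption)
        | tauto
        | simp_all)
  rw [Finset.sum_congr rfl fun a _ => Finset.sum_congr rfl fun b _ =>
    Finset.sum_congr rfl fun c _ => Finset.sum_congr rfl fun d _ => split a b c d]
  simp only [Finset.sum_add_distrib, Finset.sum_sub_distrib, Fintype.sum_ite_eq',
    sum_ite_const, Finset.sum_const_zero]
  simp only [mul_sub, mul_add, Finset.mul_sum]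

/-- Flattening a quadruple sum. -/
lemma sum4_flatten (f : Fin n → Fin n → Fin n → Fin n → ℂ) :
    ∑ p : Fin n × Fin n × Fin n × Fin n, f p.1 p.2.1 p.2.2.1 p.2.2.2
      = ∑ i, ∑ j, ∑ k, ∑ l, f i j k l := by
  rw [Fintype.sum_prod_type]
  exact Finset.sum_congr rfl fun i _ => by
    rw [Fintype.sum_prod_type]
    exact Finset.sum_congr rfl fun j _ => by rw [Fintype.sum_prod_type]

open scoped MatrixOrder in
/-- Simultaneous reduction: a matrix `P` with `P * Pᴴ = g⁻¹` and `Pᴴ * h * P` real diagonal. -/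
lemma exists_simult (g : Matrix (Fin n) (Fin n) ℂ) (hg : g.PosDef) (hh : h.PosDef) :
    ∃ (P : Matrix (Fin n) (Fin n) ℂ) (lam : Fin n → ℝ),
      P * P.conjTranspose = g⁻¹ ∧
      P.conjTranspose * h * P = Matrix.diagonal (fun a => (lam a : ℂ)) := by
  classical
  set S := CFC.sqrt g with hSdef
  have hS2 : S * S = g := CFC.sqrt_mul_sqrt_self g hg.posSemidef.nonneg
  have hSH : S.IsHermitian := (Matrix.LE.le.posSemidef (CFC.sqrt_nonneg g)).1
  have hgdet : IsUnit g.det := (Matrix.isUnit_iff_isUnit_det g).mp hg.isUnit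
  have hSdet : IsUnit S.det := by
    have : IsUnit (S.det * S.det) := by rw [← Matrix.det_mul, hS2]; exact hgdet
    exact isUnit_of_mul_isUnit_left this
  have hSinvH : S⁻¹.conjTranspose = S⁻¹ := by
    rw [Matrix.conjTranspose_nonsing_inv, hSH.eq]
  have hh'H : (S⁻¹ * h * S⁻¹).IsHermitian := by
    show (S⁻¹ * h * S⁻¹).conjTranspose = _
    rw [Matrix.conjTranspose_mul, Matrix.conjTranspose_mul, hSinvH, hh.1.eq, mul_assoc]
  set U := (hh'H.eigenvectorUnitary : Matrix (Fin n) (Fin n) ℂ) with hUdef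
  have hUU' : U * star U = 1 := Matrix.mem_unitaryGroup_iff.mp hh'H.eigenvectorUnitary.2
  have hU'U : star U * U = 1 := Matrix.mem_unitaryGroup_iff'.mp hh'H.eigenvectorUnitary.2
  have hspec : S⁻¹ * h * S⁻¹
      = U * Matrix.diagonal (fun a => (hh'H.eigenvalues a : ℂ)) * star U := by
    have := hh'H.spectral_theorem
    rw [Unitary.conjStarAlgAut_apply] at this
    exact this
  refine ⟨S⁻¹ * U, hh'H.eigenvalues, ?_, ?_⟩
  · rw [Matrix.conjTranspose_mul, ← Matrix.star_eq_conjTranspose U]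
    calc S⁻¹ * U * (star U * S⁻¹.conjTranspose) = S⁻¹ * (U * star U) * S⁻¹ := by
          rw [hSinvH]; noncomm_ring
      _ = S⁻¹ * S⁻¹ := by rw [hUU', mul_one]
      _ = g⁻¹ := by rw [← hS2, Matrix.mul_inv_rev]
  · rw [Matrix.conjTranspose_mul, ← Matrix.star_eq_conjTranspose U, hSinvH]
    calc star U * S⁻¹ * h * (S⁻¹ * U) = star U * (S⁻¹ * h * S⁻¹) * U := by noncomm_ring
      _ = star U * (U * Matrix.diagonal (fun a => (hh'H.eigenvalues a : ℂ)) * star U) * U :=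
          congrArg (fun M => star U * M * U) hspec
      _ = Matrix.diagonal (fun a => (hh'H.eigenvalues a : ℂ)) := by
          rw [show star U * (U * Matrix.diagonal (fun a => (hh'H.eigenvalues a : ℂ)) * star U) * U
            = (star U * U) * Matrix.diagonal (fun a => (hh'H.eigenvalues a : ℂ)) * (star U * U)
            from by noncomm_ring, hU'U, one_mul, mul_one]

end RoydenAux

open RoydenAux

/-- **Royden's lemma (algebraic form).** Let `g, h` be two Hermitian positive definite
inner products on an `n`-dimensional complex vector space, given in a basis by the
Hermitian positive definite matrices `g i j = g(eᵢ, eⱼ)`, `h i j = h(eᵢ, eⱼ)`, and let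
`R` be a curvature-type tensor, i.e. `R i j k l = R̃(eᵢ, ēⱼ, eₖ, ē_l)` satisfies the
Kähler symmetries `R̃(X,Ȳ,Z,W̄) = R̃(Z,Ȳ,X,W̄) = R̃(X,W̄,Z,Ȳ)` and the reality condition
`R̃(X,Ȳ,Z,W̄) = conj R̃(Y,X̄,W,Z̄)`. If the holomorphic sectional curvature bound
`R̃(v,v̄,v,v̄) ≤ -κ h(v,v)²` holds for all `v` and some `κ > 0`, then
`g^{ij̄} g^{kl̄} R̃_{ij̄kl̄} ≤ -((n+1)/(2n)) κ (tr_g h)²`, where `g^{ij̄} = ((g⁻¹)ᵀ) i j`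
and `tr_g h = g^{ij̄} h_{ij̄} = tr (g⁻¹ * h)`. -/
theorem royden_trace_estimate
    {n : ℕ} (hn : 0 < n) {κ : ℝ} (hκ : 0 < κ)
    (g h : Matrix (Fin n) (Fin n) ℂ) (hg : g.PosDef) (hh : h.PosDef)
    (R : Fin n → Fin n → Fin n → Fin n → ℂ)
    (hsymm₁ : ∀ i j k l, R i j k l = R k j i l)
    (hsymm₂ : ∀ i j k l, R i j k l = R i l k j)
    (hconj : ∀ i j k l, R i j k l = conj (R j i l k))
    (hHSC : ∀ v : Fin n → ℂ,
      (∑ i, ∑ j, ∑ k, ∑ l, R i j k l * v i * conj (v j) * v k * conj (v l)).re ≤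
        -κ * ((∑ i, ∑ j, h i j * v i * conj (v j)).re) ^ 2) :
    (∑ i, ∑ j, ∑ k, ∑ l, (g⁻¹) j i * (g⁻¹) l k * R i j k l).re ≤
      -((n + 1 : ℝ) / (2 * n)) * κ * (((g⁻¹ * h).trace).re) ^ 2 := by
  classical
  obtain ⟨P, lam, hPPH, hPhP⟩ := exists_simult h g hg hh
  set w : Fin n → Fin n → ℂ := fun a i => conj (P i a) with hw
  have hconjh : ∀ i j, conj (h j i) = h i j := by
    intro i j
    conv_rhs => rw [← hh.1]
    rw [Matrix.conjTranspose_apply, RCLike.star_def]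
  -- entries of g⁻¹
  have hE1 : ∀ i j, (g⁻¹) j i = ∑ a, w a i * conj (w a j) := by
    intro i j
    rw [← hPPH, Matrix.mul_apply]
    refine Finset.sum_congr rfl fun a _ => ?_
    rw [Matrix.conjTranspose_apply, RCLike.star_def]
    simp only [hw, Complex.conj_conj]
    ring
  -- h is diagonal on the w's
  have hE2 : ∀ a b, Hq h (w a) (w b) = if b = a then ((lam a : ℝ) : ℂ) else 0 := by
    intro a b
    have h1 : (P.conjTranspose * h * P) b a = ∑ i, ∑ j, conj (P j b) * (h j i * P i a) := by
      rw [Matrix.mul_apply]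
      refine Finset.sum_congr rfl fun i _ => ?_
      rw [Matrix.mul_apply, Finset.sum_mul]
      refine Finset.sum_congr rfl fun j _ => ?_
      rw [Matrix.conjTranspose_apply, RCLike.star_def]
      ring
    have h2 : Hq h (w a) (w b) = conj ((P.conjTranspose * h * P) b a) := by
      rw [h1, map_sum, Hq, Fintype.sum_prod_type]
      refine Finset.sum_congr rfl fun i _ => ?_
      rw [map_sum]
      refine Finset.sum_congr rfl fun j _ => ?_
      simp only [map_mul, Complex.conj_conj, hw]
      rw [hconjh i j]
      ring
    rw [h2, hPhP, Matrix.diagonal_apply]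
    split_ifs with hba
    · simp [hba]
    · simp
  -- trace identity
  have htr : ((g⁻¹ * h).trace) = ∑ a, ((lam a : ℝ) : ℂ) := by
    calc (g⁻¹ * h).trace = (P * P.conjTranspose * h).trace := by rw [hPPH]
      _ = (P.conjTranspose * h * P).trace := (Matrix.trace_mul_cycle _ _ _).symm
      _ = (Matrix.diagonal fun a => ((lam a : ℝ) : ℂ)).trace := by rw [hPhP]
      _ = ∑ a, ((lam a : ℝ) : ℂ) := Matrix.trace_diagonal _
  set T : ℝ := ∑ a, lam a with hT
  have htrre : ((g⁻¹ * h).trace).re = T := by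
    rw [htr, Complex.re_sum]
    simp [hT]
  -- diagonal holomorphic sectional curvature bounds
  have hdiag : ∀ a, (Rq R (w a) (w a) (w a) (w a)).re ≤ -κ * (lam a) ^ 2 := by
    intro a
    have := hHSC (w a)
    rw [← Rq_eq_sum, ← Hq_eq_sum, hE2 a a, if_pos rfl] at this
    simpa using this
  -- the test vectors all have h-norm T
  have hVx : ∀ x : Fin n → ZMod 4,
      Hq h (fun i => ∑ a, e (x a) * w a i) (fun i => ∑ a, e (x a) * w a i) = ((T : ℝ) : ℂ) := by
    intro x
    rw [Hq_sum1]
    have hterm : ∀ a : Fin n, e (x a) * Hq h (w a) (fun i => ∑ b, e (x b) * w b i)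
        = ((lam a : ℝ) : ℂ) := by
      intro a
      rw [Hq_sum2]
      rw [show ∑ b, conj (e (x b)) * Hq h (w a) (w b)
          = ∑ b, (if b = a then conj (e (x b)) * ((lam a : ℝ) : ℂ) else 0) from
        Finset.sum_congr rfl fun b _ => by rw [hE2]; split <;> simp]
      rw [Fintype.sum_ite_eq', ← mul_assoc, e_mul_conj, one_mul]
    rw [Finset.sum_congr rfl fun a _ => hterm a, hT]
    push_cast
    ring
  -- HSC bound for each test vector
  have hHSCx : ∀ x : Fin n → ZMod 4,
      (Rq R (fun i => ∑ a, e (x a) * w a i) (fun i => ∑ a, e (x a) * w a i)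
        (fun i => ∑ a, e (x a) * w a i) (fun i => ∑ a, e (x a) * w a i)).re ≤ -κ * T ^ 2 := by
    intro x
    have := hHSC (fun i => ∑ a, e (x a) * w a i)
    rw [← Rq_eq_sum, ← Hq_eq_sum, hVx x] at this
    simpa using this
  -- sum the HSC bounds
  have hkey := key_identity R w
  have hsum : (∑ x : Fin n → ZMod 4,
      Rq R (fun i => ∑ a, e (x a) * w a i) (fun i => ∑ a, e (x a) * w a i)
        (fun i => ∑ a, e (x a) * w a i) (fun i => ∑ a, e (x a) * w a i)).re
      ≤ (4 : ℝ) ^ n * (-κ * T ^ 2) := by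
    rw [Complex.re_sum]
    calc ∑ x : Fin n → ZMod 4, (Rq R _ _ _ _).re
        ≤ ∑ _x : Fin n → ZMod 4, (-κ * T ^ 2) := Finset.sum_le_sum fun x _ => hHSCx x
      _ = (4 : ℝ) ^ n * (-κ * T ^ 2) := by
          rw [Finset.sum_const, Finset.card_univ, Fintype.card_fun, ZMod.card, Fintype.card_fin,
            nsmul_eq_mul]
          push_cast
          ring
  rw [hkey] at hsum
  have h4C : ((4 : ℂ) ^ n) = (((4 : ℝ) ^ n : ℝ) : ℂ) := by push_cast; ring
  rw [h4C, Complex.re_ofReal_mul] at hsum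
  have h4pos : (0 : ℝ) < 4 ^ n := by positivity
  have hZ : ((∑ a, ∑ c, Rq R (w a) (w a) (w c) (w c))
      + (∑ a, ∑ b, Rq R (w a) (w b) (w b) (w a))
      - ∑ a, Rq R (w a) (w a) (w a) (w a)).re ≤ -κ * T ^ 2 :=
    (mul_le_mul_iff_right₀ h4pos).mp hsum
  have hBA : (∑ a, ∑ b, Rq R (w a) (w b) (w b) (w a))
      = ∑ a, ∑ c, Rq R (w a) (w a) (w c) (w c) :=
    Finset.sum_congr rfl fun a _ => Finset.sum_congr rfl fun b _ =>
      Rq_swap24 R hsymm₂ (w a) (w b)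
  rw [hBA] at hZ
  -- identify the goal sum
  have hLHS : (∑ i, ∑ j, ∑ k, ∑ l, (g⁻¹) j i * (g⁻¹) l k * R i j k l)
      = ∑ a, ∑ c, Rq R (w a) (w a) (w c) (w c) := by
    rw [← sum4_flatten]
    calc ∑ p : Fin n × Fin n × Fin n × Fin n,
          (g⁻¹) p.2.1 p.1 * (g⁻¹) p.2.2.2 p.2.2.1 * R p.1 p.2.1 p.2.2.1 p.2.2.2
        = ∑ p : Fin n × Fin n × Fin n × Fin n, ∑ a, ∑ c,
            (w a p.1 * conj (w a p.2.1)) * (w c p.2.2.1 * conj (w c p.2.2.2))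
              * R p.1 p.2.1 p.2.2.1 p.2.2.2 := by
          refine Finset.sum_congr rfl fun p _ => ?_
          rw [hE1, hE1]
          simp only [Finset.sum_mul, Finset.mul_sum]
          exact Finset.sum_comm
      _ = ∑ a, ∑ p : Fin n × Fin n × Fin n × Fin n, ∑ c,
            (w a p.1 * conj (w a p.2.1)) * (w c p.2.2.1 * conj (w c p.2.2.2))
              * R p.1 p.2.1 p.2.2.1 p.2.2.2 := Finset.sum_comm
      _ = ∑ a, ∑ c, ∑ p : Fin n × Fin n × Fin n × Fin n,
            (w a p.1 * conj (w a p.2.1)) * (w c p.2.2.1 * conj (w c p.2.2.2))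
              * R p.1 p.2.1 p.2.2.1 p.2.2.2 :=
          Finset.sum_congr rfl fun a _ => Finset.sum_comm
      _ = ∑ a, ∑ c, Rq R (w a) (w a) (w c) (w c) := by
          refine Finset.sum_congr rfl fun a _ => Finset.sum_congr rfl fun c _ => ?_
          rw [Rq]
          exact Finset.sum_congr rfl fun p _ => by ring
  rw [hLHS, htrre]
  -- final arithmetic
  set A : ℝ := (∑ a, ∑ c, Rq R (w a) (w a) (w c) (w c)).re with hA
  have hC : (∑ a, Rq R (w a) (w a) (w a) (w a)).re ≤ -κ * ∑ a, (lam a) ^ 2 := by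
    rw [Complex.re_sum]
    calc ∑ a, (Rq R (w a) (w a) (w a) (w a)).re ≤ ∑ a, (-κ * (lam a) ^ 2) :=
          Finset.sum_le_sum fun a _ => hdiag a
      _ = -κ * ∑ a, (lam a) ^ 2 := by rw [Finset.mul_sum]
  have h2A : 2 * A ≤ -κ * T ^ 2 + (-κ * ∑ a, (lam a) ^ 2) := by
    have := hZ
    simp only [Complex.add_re, Complex.sub_re] at this
    have hAA : (∑ a, ∑ c, Rq R (w a) (w a) (w c) (w c)).re = A := rfl
    linarith [hC]
  have hCS : T ^ 2 ≤ (n : ℝ) * ∑ a, (lam a) ^ 2 := by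
    have := sq_sum_le_card_mul_sum_sq (s := (Finset.univ : Finset (Fin n))) (f := lam)
    simpa [hT] using this
  have hn' : (0 : ℝ) < n := by exact_mod_cast hn
  have hprod1 : (n : ℝ) * (2 * A) ≤ (n : ℝ) * (-κ * T ^ 2 + (-κ * ∑ a, (lam a) ^ 2)) :=
    mul_le_mul_of_nonneg_left h2A hn'.le
  have hprod2 : κ * T ^ 2 ≤ κ * ((n : ℝ) * ∑ a, (lam a) ^ 2) :=
    mul_le_mul_of_nonneg_left hCS hκ.le
  have htarget : A * (2 * n) ≤ -(((n : ℝ) + 1)) * κ * T ^ 2 := by nlinarith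
  calc A ≤ (-(((n : ℝ) + 1)) * κ * T ^ 2) / (2 * n) := by
        rw [le_div_iff₀ (by positivity)]
        exact htarget
    _ = -((n + 1 : ℝ) / (2 * n)) * κ * T ^ 2 := by ring

end
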